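/- Let I = [0,a], let f : I → ℝ be superterzatic, let p_{ij} > 0 and r_{ij} > 0 (i = 1,…,k, j = 1,…,n_i) with ∑_{j=1}^{n_i} p_{ij} = ∑_{j=1}^{n_i} r_{ij} = 1 for each i, let x_{ij} ∈ I, and let q_i > 0 with ∑_{i=1}^k q_i = 1. Set M = max over all (j_1,…,j_k) of (p_{1j_1}⋯p_{kj_k})/(r_{1j_1}⋯r_{kj_k}), and x̌ = ∑_{i=1}^k q_i ∑_{j=1}^{n_i} r_{ij} x_{ij}. Then M·J_k(f, r_1,…,r_k, q, x_1,…,x_k) − J_k(f, p_1,…,p_k, q, x_1,…,x_k) ≥ ∑_{j_1,…,j_k} (M r_{1j_1}⋯r_{kj_k} − p_{1j_1}⋯p_{kj_k}) (∑_i q_i x_{ij_i}) [ (∑_i q_i x_{ij_i} − x̌) C(x̌) + f(|∑_i q_i x_{ij_i} − x̌|)/|∑_i q_i x_{ij_i} − x̌| ] + (∑_i q_i ∑_j p_{ij} x_{ij}) [ (∑_i q_i ∑_j (p_{ij} − r_{ij}) x_{ij}) C(x̌) + f(|∑_i q_i ∑_j (p_{ij} − r_{ij}) x_{ij}|)/|∑_i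 q_i ∑_j (p_{ij} − r_{ij}) x_{ij}| ], where C(x̌) is the constant provided by superterzaticity of f at x̌. -/

import Mathlib

open Finset

/-- `SuperterzaticWith a f C` : the function `f` is superterzatic on `I = [0,a]`,
with `C x̄` the constant provided at each point `x̄ ∈ I`. -/
def SuperterzaticWith (a : ℝ) (f : ℝ → ℝ) (C : ℝ → ℝ) : Prop :=
  ∀ xbar ∈ Set.Icc (0 : ℝ) a, ∀ (n : ℕ) (x p : Fin n → ℝ),
    (∀ i, x i ∈ Set.Icc (0 : ℝ) a) → (∀ i, 0 ≤ p i) → (∑ i, p i = 1) →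
    (∑ i, p i * x i = xbar) →
    ∑ i, p i * f (x i) - f xbar ≥
      ∑ i, p i * x i * ((x i - xbar) * C xbar + f |x i - xbar| / |x i - xbar|)

/-- The generalized Jensen functional `J_k`. -/
noncomputable def genJensen (f : ℝ → ℝ) (k : ℕ) (n : Fin k → ℕ)
    (p x : ∀ i : Fin k, Fin (n i) → ℝ) (q : Fin k → ℝ) : ℝ :=
  ∑ j : ∀ i : Fin k, Fin (n i), (∏ i, p i (j i)) * f (∑ i, q i * x i (j i)) -
    f (∑ i, q i * ∑ j, p i j * x i j)

lemma sterz_fintype {a : ℝ} {f C : ℝ → ℝ} (hf : SuperterzaticWith a f C)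
    {xbar : ℝ} (hxbar : xbar ∈ Set.Icc (0 : ℝ) a) {ι : Type*} [Fintype ι]
    (x p : ι → ℝ) (hx : ∀ i, x i ∈ Set.Icc (0 : ℝ) a) (hp : ∀ i, 0 ≤ p i)
    (hps : ∑ i, p i = 1) (hb : ∑ i, p i * x i = xbar) :
    ∑ i, p i * f (x i) - f xbar ≥
      ∑ i, p i * x i * ((x i - xbar) * C xbar + f |x i - xbar| / |x i - xbar|) := by
  obtain ⟨e⟩ : Nonempty (ι ≃ Fin (Fintype.card ι)) := ⟨Fintype.equivFin ι⟩
  have h := hf xbar hxbar (Fintype.card ι) (x ∘ e.symm) (p ∘ e.symm)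
    (fun i => hx _) (fun i => hp _)
    ((Equiv.sum_comp e.symm p).trans hps)
    ((Equiv.sum_comp e.symm (fun i => p i * x i)).trans hb)
  calc ∑ i, p i * f (x i) - f xbar
      = ∑ i, (p ∘ e.symm) i * f ((x ∘ e.symm) i) - f xbar := by
        simp only [Function.comp_apply]
        rw [Equiv.sum_comp e.symm (fun i => p i * f (x i))]
    _ ≥ ∑ i, (p ∘ e.symm) i * (x ∘ e.symm) i *
          (((x ∘ e.symm) i - xbar) * C xbar + f |(x ∘ e.symm) i - xbar| / |(x ∘ e.symm) i - xbar|) := h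
    _ = ∑ i, p i * x i * ((x i - xbar) * C xbar + f |x i - xbar| / |x i - xbar|) := by
        simp only [Function.comp_apply]
        rw [Equiv.sum_comp e.symm (fun i => p i * x i * ((x i - xbar) * C xbar + f |x i - xbar| / |x i - xbar|))]

lemma combo_mem {a : ℝ} {ι : Type*} [Fintype ι] {q z : ι → ℝ}
    (hq : ∀ i, 0 ≤ q i) (hqs : ∑ i, q i = 1) (hz : ∀ i, z i ∈ Set.Icc (0 : ℝ) a) :
    ∑ i, q i * z i ∈ Set.Icc (0 : ℝ) a := by
  constructor
  · exact Finset.sum_nonneg fun i _ => mul_nonneg (hq i) (hz i).1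
  · calc ∑ i, q i * z i ≤ ∑ i, q i * a :=
          Finset.sum_le_sum fun i _ => mul_le_mul_of_nonneg_left (hz i).2 (hq i)
    _ = a := by rw [← Finset.sum_mul, hqs, one_mul]

lemma swap_sum {k : ℕ} {n : Fin k → ℕ} (r x : ∀ i : Fin k, Fin (n i) → ℝ)
    (hrsum : ∀ i, ∑ j, r i j = 1) (q : Fin k → ℝ) :
    ∑ j : ∀ i : Fin k, Fin (n i), (∏ i, r i (j i)) * (∑ i, q i * x i (j i))
      = ∑ i, q i * ∑ l, r i l * x i l := by
  simp_rw [Finset.mul_sum]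
  rw [Finset.sum_comm]
  refine Finset.sum_congr rfl fun i _ => ?_
  have key : ∑ j : ∀ i : Fin k, Fin (n i), (∏ m, r m (j m)) * x i (j i)
      = ∑ l, r i l * x i l := by
    set g : ∀ m : Fin k, Fin (n m) → ℝ := Function.update r i (fun l => r i l * x i l) with hg
    have h1 : ∀ j : ∀ i : Fin k, Fin (n i), ∏ m, g m (j m) = (∏ m, r m (j m)) * x i (j i) := by
      intro j
      rw [← Finset.mul_prod_erase univ (fun m => g m (j m)) (mem_univ i),
        ← Finset.mul_prod_erase univ (fun m => r m (j m)) (mem_univ i)]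
      have : ∏ m ∈ univ.erase i, g m (j m) = ∏ m ∈ univ.erase i, r m (j m) := by
        refine Finset.prod_congr rfl fun m hm => ?_
        rw [hg, Function.update_of_ne (Finset.ne_of_mem_erase hm)]
      rw [this, hg, Function.update_self]
      ring
    simp_rw [← h1]
    rw [← Fintype.piFinset_univ, ← Finset.prod_univ_sum]
    rw [← Finset.mul_prod_erase univ (fun m => ∑ l, g m l) (mem_univ i)]
    have h2 : ∏ m ∈ univ.erase i, ∑ l, g m l = 1 := by
      apply Finset.prod_eq_one
      intro m hm
      rw [hg]
      simp only [Function.update_of_ne (Finset.ne_of_mem_erase hm)]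
      exact hrsum m
    rw [h2, mul_one, hg, Function.update_self]
  calc ∑ j : ∀ i : Fin k, Fin (n i), (∏ m, r m (j m)) * (q i * x i (j i))
      = q i * ∑ j : ∀ i : Fin k, Fin (n i), (∏ m, r m (j m)) * x i (j i) := by
        rw [Finset.mul_sum]; refine Finset.sum_congr rfl fun j _ => by ring
    _ = q i * ∑ l, r i l * x i l := by rw [key]
    _ = ∑ l, q i * (r i l * x i l) := by rw [Finset.mul_sum]

lemma prod_sum_one {k : ℕ} {n : Fin k → ℕ} (r : ∀ i : Fin k, Fin (n i) → ℝ)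
    (hrsum : ∀ i, ∑ j, r i j = 1) :
    ∑ j : ∀ i : Fin k, Fin (n i), ∏ i, r i (j i) = 1 := by
  rw [← Fintype.piFinset_univ, ← Finset.prod_univ_sum]
  simp [hrsum]

/-- Theorem 6, second inequality. -/
theorem max_smul_genJensen_sub_ge (a : ℝ) (f C : ℝ → ℝ)
    (hf : SuperterzaticWith a f C)
    (k : ℕ) (n : Fin k → ℕ) (p r x : ∀ i : Fin k, Fin (n i) → ℝ) (q : Fin k → ℝ)
    (hp : ∀ i j, 0 < p i j) (hpsum : ∀ i, ∑ j, p i j = 1)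
    (hr : ∀ i j, 0 < r i j) (hrsum : ∀ i, ∑ j, r i j = 1)
    (hx : ∀ i j, x i j ∈ Set.Icc (0 : ℝ) a)
    (hq : ∀ i, 0 < q i) (hqsum : ∑ i, q i = 1)
    (M : ℝ)
    (hM : IsGreatest {v : ℝ | ∃ j : ∀ i : Fin k, Fin (n i),
      v = (∏ i, p i (j i)) / (∏ i, r i (j i))} M)
    (xcheck : ℝ) (hxcheck : xcheck = ∑ i, q i * ∑ j, r i j * x i j) :
    M * genJensen f k n r x q - genJensen f k n p x q ≥
      (∑ j : ∀ i : Fin k, Fin (n i),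
        (M * (∏ i, r i (j i)) - ∏ i, p i (j i)) * (∑ i, q i * x i (j i)) *
          ((∑ i, q i * x i (j i) - xcheck) * C xcheck +
            f |∑ i, q i * x i (j i) - xcheck| / |∑ i, q i * x i (j i) - xcheck|))
      + (∑ i, q i * ∑ j, p i j * x i j) *
          ((∑ i, q i * ∑ j, (p i j - r i j) * x i j) * C xcheck +
            f |∑ i, q i * ∑ j, (p i j - r i j) * x i j| /
              |∑ i, q i * ∑ j, (p i j - r i j) * x i j|) := by
  classical
  have hR : ∀ j : ∀ i : Fin k, Fin (n i), (0:ℝ) < ∏ i, r i (j i) :=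
    fun j => Finset.prod_pos fun i _ => hr i (j i)
  have hP : ∀ j : ∀ i : Fin k, Fin (n i), (0:ℝ) < ∏ i, p i (j i) :=
    fun j => Finset.prod_pos fun i _ => hp i (j i)
  have hM0 : 0 < M := by
    obtain ⟨j, hj⟩ := hM.1
    rw [hj]; exact div_pos (hP j) (hR j)
  have hMne : M ≠ 0 := ne_of_gt hM0
  have hMR : ∀ j : ∀ i : Fin k, Fin (n i), ∏ i, p i (j i) ≤ M * ∏ i, r i (j i) := by
    intro j
    have h2 := hM.2 ⟨j, rfl⟩
    calc ∏ i, p i (j i) = ((∏ i, p i (j i)) / ∏ i, r i (j i)) * ∏ i, r i (j i) :=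
          (div_mul_cancel₀ _ (hR j).ne').symm
      _ ≤ M * ∏ i, r i (j i) := mul_le_mul_of_nonneg_right h2 (hR j).le
  have hsumR : ∑ j : ∀ i : Fin k, Fin (n i), ∏ i, r i (j i) = 1 := prod_sum_one r hrsum
  have hsumP : ∑ j : ∀ i : Fin k, Fin (n i), ∏ i, p i (j i) = 1 := prod_sum_one p hpsum
  have hswR : ∑ j : ∀ i : Fin k, Fin (n i), (∏ i, r i (j i)) * (∑ i, q i * x i (j i))
      = ∑ i, q i * ∑ l, r i l * x i l := swap_sum r x hrsum q
  have hswP : ∑ j : ∀ i : Fin k, Fin (n i), (∏ i, p i (j i)) * (∑ i, q i * x i (j i))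
      = ∑ i, q i * ∑ l, p i l * x i l := swap_sum p x hpsum q
  have hy_mem : ∀ j : ∀ i : Fin k, Fin (n i), (∑ i, q i * x i (j i)) ∈ Set.Icc (0:ℝ) a :=
    fun j => combo_mem (fun i => (hq i).le) hqsum (fun i => hx i (j i))
  have hyp_mem : (∑ i, q i * ∑ l, p i l * x i l) ∈ Set.Icc (0:ℝ) a :=
    combo_mem (fun i => (hq i).le) hqsum
      (fun i => combo_mem (fun l => (hp i l).le) (hpsum i) (fun l => hx i l))
  have hxc : xcheck ∈ Set.Icc (0:ℝ) a := by
    rw [hxcheck]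
    exact combo_mem (fun i => (hq i).le) hqsum
      (fun i => combo_mem (fun l => (hr i l).le) (hrsum i) (fun l => hx i l))
  simp only [genJensen]
  rw [← hxcheck]
  set yp : ℝ := ∑ i, q i * ∑ l, p i l * x i l with hypdef
  have hd : ∑ i, q i * ∑ l, (p i l - r i l) * x i l = yp - xcheck := by
    rw [hxcheck, hypdef]
    simp only [sub_mul, mul_sub, Finset.sum_sub_distrib]
  rw [hd]
  set Φ : ℝ → ℝ := fun t => (t - xcheck) * C xcheck + f |t - xcheck| / |t - xcheck| with hΦ
  have H := sterz_fintype hf hxc (ι := Option (∀ i : Fin k, Fin (n i)))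
    (fun o => o.elim yp (fun j => ∑ i, q i * x i (j i)))
    (fun o => o.elim (1/M) (fun j => (M * ∏ i, r i (j i) - ∏ i, p i (j i))/M))
    (fun o => by cases o with
      | none => exact hyp_mem
      | some j => exact hy_mem j)
    (fun o => by cases o with
      | none => exact (one_div_pos.2 hM0).le
      | some j => exact div_nonneg (sub_nonneg.2 (hMR j)) hM0.le)
    (by
      rw [Fintype.sum_option]
      simp only [Option.elim_none, Option.elim_some]
      have e1 : ∑ j : ∀ i : Fin k, Fin (n i), (M * ∏ i, r i (j i) - ∏ i, p i (j i))/M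
          = (M - 1)/M := by
        rw [eq_div_iff hMne, Finset.sum_mul]
        have term : ∀ j : ∀ i : Fin k, Fin (n i),
            ((M * ∏ i, r i (j i) - ∏ i, p i (j i))/M) * M
              = M * (∏ i, r i (j i)) - (∏ i, p i (j i)) := by
          intro j; field_simp
        rw [Finset.sum_congr rfl fun j _ => term j, Finset.sum_sub_distrib,
          ← Finset.mul_sum, hsumR, hsumP, mul_one]
      rw [e1]; field_simp; ring)
    (by
      rw [Fintype.sum_option]
      simp only [Option.elim_none, Option.elim_some]
      have e2 : ∑ j : ∀ i : Fin k, Fin (n i),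
          (M * ∏ i, r i (j i) - ∏ i, p i (j i))/M * (∑ i, q i * x i (j i))
            = (M * xcheck - yp)/M := by
        rw [eq_div_iff hMne, Finset.sum_mul]
        have term : ∀ j : ∀ i : Fin k, Fin (n i),
            ((M * ∏ i, r i (j i) - ∏ i, p i (j i))/M * (∑ i, q i * x i (j i))) * M
              = M * ((∏ i, r i (j i)) * ∑ i, q i * x i (j i))
                - (∏ i, p i (j i)) * ∑ i, q i * x i (j i) := by
          intro j; field_simp
        rw [Finset.sum_congr rfl fun j _ => term j, Finset.sum_sub_distrib,
          ← Finset.mul_sum, hswR, hswP, ← hxcheck]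
      rw [e2]; field_simp; ring)
  rw [Fintype.sum_option, Fintype.sum_option] at H
  simp only [Option.elim_none, Option.elim_some] at H
  set S1 := ∑ j : ∀ i : Fin k, Fin (n i), (∏ i, r i (j i)) * f (∑ i, q i * x i (j i)) with hS1
  set S2 := ∑ j : ∀ i : Fin k, Fin (n i), (∏ i, p i (j i)) * f (∑ i, q i * x i (j i)) with hS2
  have hA : ∑ j : ∀ i : Fin k, Fin (n i),
      (M * ∏ i, r i (j i) - ∏ i, p i (j i))/M * f (∑ i, q i * x i (j i))
        = (M * S1 - S2)/M := by
    rw [eq_div_iff hMne, Finset.sum_mul]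
    have term : ∀ j : ∀ i : Fin k, Fin (n i),
        ((M * ∏ i, r i (j i) - ∏ i, p i (j i))/M * f (∑ i, q i * x i (j i))) * M
          = M * ((∏ i, r i (j i)) * f (∑ i, q i * x i (j i)))
            - (∏ i, p i (j i)) * f (∑ i, q i * x i (j i)) := by
      intro j; field_simp
    rw [Finset.sum_congr rfl fun j _ => term j, Finset.sum_sub_distrib,
      ← Finset.mul_sum]
  set T := ∑ j : ∀ i : Fin k, Fin (n i),
      (M * (∏ i, r i (j i)) - ∏ i, p i (j i)) * (∑ i, q i * x i (j i)) *
        Φ (∑ i, q i * x i (j i)) with hT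
  have hB : ∑ j : ∀ i : Fin k, Fin (n i),
      (M * ∏ i, r i (j i) - ∏ i, p i (j i))/M * (∑ i, q i * x i (j i)) *
        Φ (∑ i, q i * x i (j i)) = T / M := by
    rw [eq_div_iff hMne, hT, Finset.sum_mul]
    refine Finset.sum_congr rfl fun j _ => ?_
    field_simp
  rw [hA, hB] at H
  have H2 := mul_le_mul_of_nonneg_left H hM0.le
  have e3 : M * (1/M * yp * Φ yp + T/M) = yp * Φ yp + T := by field_simp
  have e4 : M * (1/M * f yp + (M * S1 - S2)/M - f xcheck)
      = f yp + (M * S1 - S2) - M * f xcheck := by field_simp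
  rw [e3, e4] at H2
  simp only [hΦ] at H2
  linarith
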